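/- Any invertible n×n matrix M over a field can be written as M = L·W·U where L is lower triangular invertible, U is upper triangular invertible, and W is a permutation matrix; moreover the permutation matrix W in such a decomposition is unique. -/

import Mathlib

open Matrix Finset

namespace BruhatAux

variable {K : Type*} [Field K] {n : ℕ}

lemma permMatrix_apply {m : Type*} [DecidableEq m] (w : Equiv.Perm m) (i j : m) :
    w.permMatrix K i j = if w i = j then 1 else 0 := by
  rw [Equiv.Perm.permMatrix, PEquiv.toMatrix_toPEquiv_eq, Matrix.submatrix_apply, Matrix.one_apply, id]

/-- reindexing `Fin (n+1)` splitting off position `r`. -/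
def er (r : Fin (n + 1)) : Fin (n + 1) ≃ Fin 1 ⊕ Fin n :=
  (finSuccEquiv' r).trans
    ((Equiv.optionEquivSumPUnit (Fin n)).trans
      ((Equiv.sumComm _ _).trans
        (Equiv.sumCongr (Equiv.ofUnique PUnit.{1} (Fin 1)) (Equiv.refl _))))

@[simp] lemma er_self (r : Fin (n + 1)) : er r r = Sum.inl 0 := by
  simp [er, finSuccEquiv'_at]

@[simp] lemma er_succAbove (r : Fin (n + 1)) (a : Fin n) :
    er r (r.succAbove a) = Sum.inr a := by
  simp [er, finSuccEquiv'_succAbove]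

@[simp] lemma er_symm_inl (r : Fin (n + 1)) : (er r).symm (Sum.inl 0) = r := by
  rw [Equiv.symm_apply_eq, er_self]

@[simp] lemma er_symm_inr (r : Fin (n + 1)) (a : Fin n) :
    (er r).symm (Sum.inr a) = r.succAbove a := by
  rw [Equiv.symm_apply_eq, er_succAbove]

/-- extend a matrix by a `1` in position `(r, c)`. -/
def expand (r c : Fin (n + 1)) (P : Matrix (Fin n) (Fin n) K) :
    Matrix (Fin (n + 1)) (Fin (n + 1)) K :=
  (Matrix.fromBlocks 1 0 0 P).submatrix (er r) (er c)

@[simp] lemma expand_apply_rc (r c : Fin (n + 1)) (P : Matrix (Fin n) (Fin n) K) :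
    expand r c P r c = 1 := by
  simp [expand, Matrix.one_apply]

@[simp] lemma expand_apply_rb (r c : Fin (n + 1)) (P : Matrix (Fin n) (Fin n) K) (b : Fin n) :
    expand r c P r (c.succAbove b) = 0 := by
  simp [expand]

@[simp] lemma expand_apply_ac (r c : Fin (n + 1)) (P : Matrix (Fin n) (Fin n) K) (a : Fin n) :
    expand r c P (r.succAbove a) c = 0 := by
  simp [expand]

@[simp] lemma expand_apply_ab (r c : Fin (n + 1)) (P : Matrix (Fin n) (Fin n) K) (a b : Fin n) :
    expand r c P (r.succAbove a) (c.succAbove b) = P a b := by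
  simp [expand]

lemma expand_mul (r c d : Fin (n + 1)) (P Q : Matrix (Fin n) (Fin n) K) :
    expand r c P * expand c d Q = expand r d (P * Q) := by
  unfold expand
  rw [Matrix.submatrix_mul_equiv, Matrix.fromBlocks_multiply]
  simp

lemma det_expand (r : Fin (n + 1)) (P : Matrix (Fin n) (Fin n) K) :
    (expand r r P).det = P.det := by
  rw [expand, Matrix.det_submatrix_equiv_self, Matrix.det_fromBlocks_zero₂₁]
  simp

lemma expand_lower (r : Fin (n + 1)) (P : Matrix (Fin n) (Fin n) K)
    (hP : ∀ a b : Fin n, a < b → P a b = 0) :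
    ∀ i j : Fin (n + 1), i < j → expand r r P i j = 0 := by
  intro i j hij
  rcases eq_or_ne i r with rfl | hi
  · rcases eq_or_ne j i with rfl | hj
    · exact absurd hij (lt_irrefl _)
    · obtain ⟨b, rfl⟩ := Fin.exists_succAbove_eq hj
      simp
  · obtain ⟨a, rfl⟩ := Fin.exists_succAbove_eq hi
    rcases eq_or_ne j r with rfl | hj
    · simp
    · obtain ⟨b, rfl⟩ := Fin.exists_succAbove_eq hj
      rw [expand_apply_ab]
      exact hP a b (by rwa [Fin.succAbove_lt_succAbove_iff] at hij)

lemma expand_upper (r : Fin (n + 1)) (P : Matrix (Fin n) (Fin n) K)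
    (hP : ∀ a b : Fin n, b < a → P a b = 0) :
    ∀ i j : Fin (n + 1), j < i → expand r r P i j = 0 := by
  intro i j hij
  rcases eq_or_ne i r with rfl | hi
  · rcases eq_or_ne j i with rfl | hj
    · exact absurd hij (lt_irrefl _)
    · obtain ⟨b, rfl⟩ := Fin.exists_succAbove_eq hj
      simp
  · obtain ⟨a, rfl⟩ := Fin.exists_succAbove_eq hi
    rcases eq_or_ne j r with rfl | hj
    · simp
    · obtain ⟨b, rfl⟩ := Fin.exists_succAbove_eq hj
      rw [expand_apply_ab]
      exact hP a b (by rwa [Fin.succAbove_lt_succAbove_iff] at hij)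

/-- the permutation of `Fin (n+1)` sending `r ↦ c` and acting by `v` elsewhere. -/
def extperm (r c : Fin (n + 1)) (v : Equiv.Perm (Fin n)) : Equiv.Perm (Fin (n + 1)) :=
  (er r).trans ((Equiv.sumCongr (Equiv.refl (Fin 1)) v).trans (er c).symm)

@[simp] lemma extperm_apply_r (r c : Fin (n + 1)) (v : Equiv.Perm (Fin n)) :
    extperm r c v r = c := by simp [extperm]

@[simp] lemma extperm_apply_succAbove (r c : Fin (n + 1)) (v : Equiv.Perm (Fin n)) (a : Fin n) :
    extperm r c v (r.succAbove a) = c.succAbove (v a) := by simp [extperm]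

lemma expand_permMatrix (r c : Fin (n + 1)) (v : Equiv.Perm (Fin n)) :
    expand r c (v.permMatrix K) = (extperm r c v).permMatrix K := by
  ext i j
  rcases eq_or_ne i r with rfl | hi
  · rcases eq_or_ne j c with rfl | hj
    · simp [permMatrix_apply, Equiv.toPEquiv_apply, Equiv.toPEquiv_apply]
    · obtain ⟨b, rfl⟩ := Fin.exists_succAbove_eq hj
      simp [permMatrix_apply, Equiv.toPEquiv_apply, (Fin.succAbove_ne c b).symm]
  · obtain ⟨a, rfl⟩ := Fin.exists_succAbove_eq hi
    rcases eq_or_ne j c with rfl | hj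
    · simp [permMatrix_apply, Equiv.toPEquiv_apply, Fin.succAbove_ne]
    · obtain ⟨b, rfl⟩ := Fin.exists_succAbove_eq hj
      simp [permMatrix_apply, Equiv.toPEquiv_apply, Fin.succAbove_right_injective.eq_iff]


/-- multiplication by an identity matrix modified in column `i0`. -/
lemma colmod_mul {m : ℕ} (f : Fin m → K) (i0 : Fin m) (X : Matrix (Fin m) (Fin m) K)
    (i j : Fin m) :
    ((Matrix.of fun i j => if j = i0 then f i else if i = j then (1 : K) else 0) * X) i j
      = f i * X i0 j + (if i = i0 then 0 else X i j) := by
  rw [Matrix.mul_apply, ← Finset.add_sum_erase _ _ (Finset.mem_univ i0)]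
  congr 1
  · simp
  · have h1 : ∀ k ∈ univ.erase i0,
        (Matrix.of fun i j => if j = i0 then f i else if i = j then (1 : K) else 0) i k * X k j
          = if i = k then X k j else 0 := by
      intro k hk
      rcases Finset.mem_erase.mp hk with ⟨hk0, -⟩
      simp only [Matrix.of_apply, if_neg hk0, ite_mul, one_mul, zero_mul]
    rw [Finset.sum_congr rfl h1, Finset.sum_ite_eq (univ.erase i0) i (fun k => X k j)]
    simp only [Finset.mem_erase, Finset.mem_univ, and_true]
    by_cases h : i = i0 <;> simp [h]

lemma mul_rowmod {m : ℕ} (g : Fin m → K) (j0 : Fin m) (X : Matrix (Fin m) (Fin m) K)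
    (i j : Fin m) :
    (X * (Matrix.of fun k j => if k = j0 then g j else if k = j then (1 : K) else 0)) i j
      = X i j0 * g j + (if j = j0 then 0 else X i j) := by
  rw [Matrix.mul_apply, ← Finset.add_sum_erase _ _ (Finset.mem_univ j0)]
  congr 1
  · simp
  · have h1 : ∀ k ∈ univ.erase j0,
        X i k * (Matrix.of fun k j => if k = j0 then g j else if k = j then (1 : K) else 0) k j
          = if k = j then X i k else 0 := by
      intro k hk
      rcases Finset.mem_erase.mp hk with ⟨hk0, -⟩
      simp only [Matrix.of_apply, if_neg hk0, mul_ite, mul_one, mul_zero]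
    rw [Finset.sum_congr rfl h1, Finset.sum_ite_eq' (univ.erase j0) j (fun k => X i k)]
    simp only [Finset.mem_erase, Finset.mem_univ, and_true]
    by_cases h : j = j0 <;> simp [h]

lemma lower_mul {m : ℕ} {A B : Matrix (Fin m) (Fin m) K}
    (hA : ∀ i j, i < j → A i j = 0) (hB : ∀ i j, i < j → B i j = 0) :
    ∀ i j, i < j → (A * B) i j = 0 := by
  intro i j hij
  rw [Matrix.mul_apply]
  refine Finset.sum_eq_zero fun k _ => ?_
  rcases lt_or_ge i k with h | h
  · rw [hA i k h, zero_mul]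
  · rw [hB k j (lt_of_le_of_lt h hij), mul_zero]

lemma upper_mul {m : ℕ} {A B : Matrix (Fin m) (Fin m) K}
    (hA : ∀ i j, j < i → A i j = 0) (hB : ∀ i j, j < i → B i j = 0) :
    ∀ i j, j < i → (A * B) i j = 0 := by
  intro i j hij
  rw [Matrix.mul_apply]
  refine Finset.sum_eq_zero fun k _ => ?_
  rcases lt_or_ge j k with h | h
  · rw [hB k j h, mul_zero]
  · rw [hA i k (lt_of_le_of_lt h hij), zero_mul]

theorem exists_decomp : ∀ (n : ℕ) (M : Matrix (Fin n) (Fin n) K), IsUnit M.det →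
    ∃ (w : Equiv.Perm (Fin n)) (L U : Matrix (Fin n) (Fin n) K),
      IsUnit L.det ∧ (∀ i j, i < j → L i j = 0) ∧ IsUnit U.det ∧ (∀ i j, j < i → U i j = 0) ∧
      M = L * (w.permMatrix K) * U := by
  intro n
  induction n with
  | zero =>
    intro M _
    refine ⟨1, 1, 1, by simp, fun i => i.elim0, by simp, fun i => i.elim0, ?_⟩
    ext i
    exact i.elim0
  | succ n ih =>
    intro M hM
    classical
    -- column 0 is nonzero
    have hc : (univ.filter fun i => M i 0 ≠ 0).Nonempty := by
      by_contra h
      rw [Finset.not_nonempty_iff_eq_empty, Finset.filter_eq_empty_iff] at h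
      push_neg at h
      rw [Matrix.det_eq_zero_of_column_eq_zero 0 (fun i => h (Finset.mem_univ i))] at hM
      exact hM.ne_zero rfl
    set i0 : Fin (n + 1) := (univ.filter fun i => M i 0 ≠ 0).min' hc with hi0def
    have hp : M i0 0 ≠ 0 := (Finset.mem_filter.mp ((univ.filter fun i => M i 0 ≠ 0).min'_mem hc)).2
    have hmin : ∀ i, i < i0 → M i 0 = 0 := by
      intro i hi
      by_contra h
      exact absurd (Finset.min'_le _ i (Finset.mem_filter.mpr ⟨Finset.mem_univ i, h⟩))
        (not_le.mpr hi)
    set p : K := M i0 0 with hpdef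
    set f : Fin (n + 1) → K :=
      fun i => if i = i0 then p⁻¹ else if i0 < i then -(M i 0) * p⁻¹ else 0 with hfdef
    set E : Matrix (Fin (n + 1)) (Fin (n + 1)) K :=
      Matrix.of (fun i j => if j = i0 then f i else if i = j then (1 : K) else 0) with hEdef
    set A : Matrix (Fin (n + 1)) (Fin (n + 1)) K := E * M with hAdef
    have hA : ∀ i j, A i j = f i * M i0 j + (if i = i0 then 0 else M i j) :=
      fun i j => colmod_mul f i0 M i j
    have hA0 : ∀ i, A i 0 = if i = i0 then 1 else 0 := by
      intro i
      rw [hA]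
      rcases eq_or_ne i i0 with rfl | hi
      · have : f i0 = p⁻¹ := by simp [hfdef]
        rw [this, if_pos rfl, if_pos rfl, add_zero, ← hpdef, inv_mul_cancel₀ hp]
      · rcases lt_or_gt_of_ne hi with h | h
        · have : f i = 0 := by simp [hfdef, hi, not_lt.mpr h.le]
          rw [this, if_neg hi, if_neg hi, hmin i h]
          ring
        · have : f i = -(M i 0) * p⁻¹ := by simp [hfdef, hi, h]
          rw [this, if_neg hi, if_neg hi, ← hpdef]
          field_simp
          ring
    set g : Fin (n + 1) → K := fun j => if j = 0 then 1 else -(A i0 j) with hgdef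
    set F : Matrix (Fin (n + 1)) (Fin (n + 1)) K :=
      Matrix.of (fun k j => if k = 0 then g j else if k = j then (1 : K) else 0) with hFdef
    set B : Matrix (Fin (n + 1)) (Fin (n + 1)) K := A * F with hBdef
    have hB : ∀ i j, B i j = A i 0 * g j + (if j = 0 then 0 else A i j) :=
      fun i j => mul_rowmod g 0 A i j
    have hB0 : ∀ i, B i 0 = if i = i0 then 1 else 0 := by
      intro i
      rw [hB, ← hA0 i]
      simp [hgdef]
    have hBr : ∀ j, B i0 j = if j = 0 then 1 else 0 := by
      intro j
      rw [hB, hA0]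
      rcases eq_or_ne j 0 with rfl | hj
      · simp [hgdef]
      · simp [hgdef, hj]
    -- E and F are triangular with invertible determinant
    have hEl : ∀ i j, i < j → E i j = 0 := by
      intro i j hij
      simp only [hEdef, Matrix.of_apply, hfdef]
      rcases eq_or_ne j i0 with rfl | hj
      · simp [ne_of_lt hij, not_lt.mpr hij.le]
      · simp [hj, ne_of_lt hij]
    have hFu : ∀ i j, j < i → F i j = 0 := by
      intro i j hij
      have hi : i ≠ 0 := Fin.pos_iff_ne_zero.mp (lt_of_le_of_lt (Fin.zero_le j) hij)
      simp [hFdef, hi, (ne_of_lt hij).symm]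
    have hEdet : IsUnit E.det := by
      rw [Matrix.det_of_lowerTriangular E (fun i j (h : OrderDual.toDual j < OrderDual.toDual i) =>
        hEl i j h)]
      refine (Finset.prod_induction _ IsUnit (fun _ _ => IsUnit.mul) isUnit_one ?_)
      intro i _
      rcases eq_or_ne i i0 with rfl | hi
      · simp [hEdef, hfdef, isUnit_iff_ne_zero, hp]
      · simp [hEdef, hi]
    have hFdet : IsUnit F.det := by
      rw [Matrix.det_of_upperTriangular (fun (i j : Fin (n+1)) (h : (id j : Fin (n+1)) < id i) =>
        hFu i j h)]
      refine (Finset.prod_induction _ IsUnit (fun _ _ => IsUnit.mul) isUnit_one ?_)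
      intro i _
      rcases eq_or_ne i 0 with rfl | hi
      · simp [hFdef, hgdef]
      · simp [hFdef, hi]
    haveI : Invertible E := E.invertibleOfIsUnitDet hEdet
    haveI : Invertible F := F.invertibleOfIsUnitDet hFdet
    have hMB : M = E⁻¹ * B * F⁻¹ := by
      rw [hBdef, hAdef, Matrix.mul_assoc E M F, Matrix.inv_mul_cancel_left_of_invertible,
        Matrix.mul_inv_cancel_right_of_invertible]
    -- the reduced matrix
    set N : Matrix (Fin n) (Fin n) K := B.submatrix i0.succAbove Fin.succ with hNdef
    have hBdet : IsUnit B.det := by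
      rw [hBdef, hAdef, Matrix.det_mul, Matrix.det_mul]
      exact (hEdet.mul hM).mul hFdet
    have hNdet : IsUnit N.det := by
      rw [Matrix.det_succ_column_zero, Finset.sum_eq_single i0] at hBdet
      · rw [hB0] at hBdet
        simp only [if_pos rfl, mul_one] at hBdet
        exact (IsUnit.mul_iff.mp hBdet).2
      · intro i _ hi
        rw [hB0, if_neg hi, mul_zero, zero_mul]
      · exact fun h => absurd (Finset.mem_univ i0) h
    have hBN : B = expand i0 0 N := by
      ext i j
      rcases eq_or_ne i i0 with rfl | hi
      · rcases eq_or_ne j 0 with rfl | hj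
        · rw [hBr, if_pos rfl, expand_apply_rc]
        · obtain ⟨b, rfl⟩ := Fin.exists_succAbove_eq hj
          rw [hBr, if_neg hj, expand_apply_rb]
      · obtain ⟨a, rfl⟩ := Fin.exists_succAbove_eq hi
        rcases eq_or_ne j 0 with rfl | hj
        · rw [hB0, if_neg hi, expand_apply_ac]
        · obtain ⟨b, rfl⟩ := Fin.exists_succAbove_eq hj
          rw [expand_apply_ab, hNdef]
          simp [Matrix.submatrix_apply, Fin.zero_succAbove]
    obtain ⟨w', L', U', hL'd, hL't, hU'd, hU't, hN⟩ := ih N hNdet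
    have hEinvl : ∀ i j, i < j → E⁻¹ i j = 0 := by
      have := Matrix.blockTriangular_inv_of_blockTriangular
        (M := E) (b := OrderDual.toDual) (fun i j h => hEl i j h)
      exact fun i j h => this h
    have hFinvu : ∀ i j, j < i → F⁻¹ i j = 0 := by
      have := Matrix.blockTriangular_inv_of_blockTriangular (M := F) (b := id)
        (fun i j h => hFu i j h)
      exact fun i j h => this h
    refine ⟨extperm i0 0 w', E⁻¹ * expand i0 i0 L', expand 0 0 U' * F⁻¹, ?_, ?_, ?_, ?_, ?_⟩
    · rw [Matrix.det_mul, det_expand]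
      exact (E.isUnit_nonsing_inv_det hEdet).mul hL'd
    · exact lower_mul hEinvl (expand_lower i0 L' hL't)
    · rw [Matrix.det_mul, det_expand]
      exact hU'd.mul (F.isUnit_nonsing_inv_det hFdet)
    · exact upper_mul (expand_upper 0 U' hU't) hFinvu
    · rw [hMB, hBN, hN, ← expand_mul i0 0 0 (L' * Equiv.Perm.permMatrix K w') U',
        ← expand_mul i0 i0 0 L' (Equiv.Perm.permMatrix K w'), expand_permMatrix]
      simp only [Matrix.mul_assoc]


section Uniqueness

/-- counting function of a permutation -/
def cnt (w : Equiv.Perm (Fin n)) (i j : ℕ) : ℕ :=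
  ((univ : Finset (Fin n)).filter fun a : Fin n => (a : ℕ) < i ∧ ((w a : Fin n) : ℕ) < j).card

lemma key_sum (m : ℕ) (x y : Fin n) :
    (∑ b : {b : Fin n // (b : ℕ) < m},
        (if x = ↑b then (1 : K) else 0) * (if y = ↑b then (1 : K) else 0))
      = if x = y ∧ (x : ℕ) < m then 1 else 0 := by
  rcases lt_or_ge (x : ℕ) m with hx | hx
  · rw [Finset.sum_eq_single (⟨x, hx⟩ : {b : Fin n // (b : ℕ) < m})]
    · rcases eq_or_ne x y with rfl | h
      · simp [hx]
      · simp [hx, h, Ne.symm h]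
    · intro b _ hb
      rw [if_neg fun h => hb (Subtype.ext h.symm), zero_mul]
    · exact fun h => absurd (Finset.mem_univ _) h
  · rw [Finset.sum_eq_zero, if_neg (fun h => absurd h.2 (not_lt.mpr hx))]
    intro b _
    rw [if_neg, zero_mul]
    intro h
    rw [h] at hx
    exact absurd b.2 (not_lt.mpr hx)

lemma rank_perm_block (w : Equiv.Perm (Fin n)) (i j : ℕ) :
    ((w.permMatrix K).toBlock (fun a : Fin n => (a : ℕ) < i)
        (fun b : Fin n => (b : ℕ) < j)).rank = cnt w i j := by
  classical
  set W := (w.permMatrix K).toBlock (fun a : Fin n => (a : ℕ) < i)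
    (fun b : Fin n => (b : ℕ) < j) with hWdef
  have hW : ∀ (a : {a : Fin n // (a : ℕ) < i}) (b : {b : Fin n // (b : ℕ) < j}),
      W a b = if w ↑a = ↑b then (1 : K) else 0 := fun a b => by
    rw [hWdef, Matrix.toBlock_apply, permMatrix_apply]
  have h1 : W * Wᵀ = Matrix.diagonal
      (fun a : {a : Fin n // (a : ℕ) < i} =>
        if ((w ↑a : Fin n) : ℕ) < j then (1 : K) else 0) := by
    ext a a'
    rw [Matrix.mul_apply]
    simp_rw [Matrix.transpose_apply, hW]
    rw [key_sum j (w ↑a) (w ↑a'), Matrix.diagonal_apply]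
    rcases eq_or_ne a a' with rfl | h
    · simp
    · rw [if_neg h, if_neg]
      exact fun hc => h (Subtype.ext (w.injective hc.1))
  have hiff : ∀ (a : {a : Fin n // (a : ℕ) < i}) (c : {c : Fin n // (c : ℕ) < j}),
      (if w ↑a = (↑c : Fin n) then (1 : K) else 0)
        = if (w.symm ↑c : Fin n) = ↑a then (1 : K) else 0 := by
    intro a c
    refine if_congr ⟨fun h => ?_, fun h => ?_⟩ rfl rfl
    · rw [← h, Equiv.symm_apply_apply]
    · rw [← h, Equiv.apply_symm_apply]
  have h2 : Wᵀ * W = Matrix.diagonal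
      (fun b : {b : Fin n // (b : ℕ) < j} =>
        if ((w.symm ↑b : Fin n) : ℕ) < i then (1 : K) else 0) := by
    ext b b'
    rw [Matrix.mul_apply]
    simp_rw [Matrix.transpose_apply, hW, hiff]
    rw [key_sum i (w.symm ↑b) (w.symm ↑b'), Matrix.diagonal_apply]
    rcases eq_or_ne b b' with rfl | h
    · simp
    · rw [if_neg h, if_neg]
      exact fun hc => h (Subtype.ext (w.symm.injective hc.1))
  have h3 : W * (Wᵀ * W) = W := by
    rw [h2]
    ext a b
    rw [Matrix.mul_diagonal]
    rcases eq_or_ne (w ↑a) (↑b : Fin n) with h | h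
    · have hs : (w.symm ↑b : Fin n) = ↑a := by rw [← h, Equiv.symm_apply_apply]
      rw [hs, if_pos a.2, mul_one]
    · rw [hW, if_neg h, zero_mul]
  have r1 := Matrix.rank_mul_le_left W Wᵀ
  have r2 := Matrix.rank_mul_le_right W (Wᵀ * W)
  rw [h3] at r2
  rw [h1, Matrix.rank_diagonal] at r1
  rw [h2, Matrix.rank_diagonal] at r2
  have c1 : Fintype.card {a : {a : Fin n // (a : ℕ) < i} //
      (if ((w ↑a : Fin n) : ℕ) < j then (1 : K) else 0) ≠ 0} = cnt w i j := by
    have e : {a : {a : Fin n // (a : ℕ) < i} //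
          (if ((w ↑a : Fin n) : ℕ) < j then (1 : K) else 0) ≠ 0}
        ≃ {a : Fin n // (a : ℕ) < i ∧ ((w a : Fin n) : ℕ) < j} := by
      refine Equiv.trans (Equiv.subtypeEquivRight fun a => ?_)
        (Equiv.subtypeSubtypeEquivSubtypeInter (fun a : Fin n => (a : ℕ) < i)
          (fun a : Fin n => ((w a : Fin n) : ℕ) < j))
      by_cases h : ((w ↑a : Fin n) : ℕ) < j <;> simp [h]
    rw [Fintype.card_congr e, cnt, Fintype.card_subtype]
  have c2 : Fintype.card {b : {b : Fin n // (b : ℕ) < j} //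
      (if ((w.symm ↑b : Fin n) : ℕ) < i then (1 : K) else 0) ≠ 0} = cnt w i j := by
    have e : {b : {b : Fin n // (b : ℕ) < j} //
          (if ((w.symm ↑b : Fin n) : ℕ) < i then (1 : K) else 0) ≠ 0}
        ≃ {a : Fin n // (a : ℕ) < i ∧ ((w a : Fin n) : ℕ) < j} := by
      refine Equiv.trans (Equiv.trans (Equiv.subtypeEquivRight fun b => ?_)
        (Equiv.subtypeSubtypeEquivSubtypeInter (fun b : Fin n => (b : ℕ) < j)
          (fun b : Fin n => ((w.symm b : Fin n) : ℕ) < i))) ?_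
      · by_cases h : ((w.symm ↑b : Fin n) : ℕ) < i <;> simp [h]
      · exact ⟨fun b => ⟨w.symm ↑b, b.2.2, by
            rw [Equiv.apply_symm_apply]; exact b.2.1⟩,
          fun a => ⟨w ↑a, a.2.2, by rw [Equiv.symm_apply_apply]; exact a.2.1⟩,
          fun b => Subtype.ext (Equiv.apply_symm_apply _ _),
          fun a => Subtype.ext (Equiv.symm_apply_apply _ _)⟩
    rw [Fintype.card_congr e, cnt, Fintype.card_subtype]
  rw [c1] at r1
  rw [c2] at r2
  exact le_antisymm r2 r1

lemma rank_block_decomp (L W U : Matrix (Fin n) (Fin n) K) (hLd : IsUnit L.det)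
    (hLt : ∀ i j, i < j → L i j = 0) (hUd : IsUnit U.det)
    (hUt : ∀ i j, j < i → U i j = 0) (i j : ℕ) :
    ((L * W * U).toBlock (fun a : Fin n => (a : ℕ) < i) (fun b : Fin n => (b : ℕ) < j)).rank
      = (W.toBlock (fun a : Fin n => (a : ℕ) < i) (fun b : Fin n => (b : ℕ) < j)).rank := by
  classical
  set p := fun a : Fin n => (a : ℕ) < i with hpdef
  set q := fun b : Fin n => (b : ℕ) < j with hqdef
  haveI : Invertible L := L.invertibleOfIsUnitDet hLd
  haveI : Invertible U := U.invertibleOfIsUnitDet hUd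
  have hLbt : Lᵀ.BlockTriangular (Fin.val) := fun a b h => hLt b a h
  haveI : Invertible (Lᵀ.toBlock p p) := hLbt.invertibleToBlock i
  have hLdet : IsUnit (L.toBlock p p).det := by
    have he : L.toBlock p p = (Lᵀ.toBlock p p)ᵀ := by ext a b; rfl
    rw [he]
    exact Matrix.isUnit_det_of_invertible _
  have hUbt : U.BlockTriangular (Fin.val) := fun a b h => hUt a b h
  haveI : Invertible (U.toBlock q q) := hUbt.invertibleToBlock j
  have hUdet : IsUnit (U.toBlock q q).det := Matrix.isUnit_det_of_invertible _
  have e1 : (L * (W * U)).toBlock p q = L.toBlock p p * (W * U).toBlock p q := by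
    rw [Matrix.toBlock_mul_eq_add p p q L (W * U)]
    have hz : L.toBlock p (fun k => ¬ p k) = 0 := by
      ext a b
      exact hLt ↑a ↑b (Fin.lt_def.mpr (lt_of_lt_of_le a.2 (not_lt.mp b.2)))
    rw [hz, Matrix.zero_mul, add_zero]
  have e2 : (W * U).toBlock p q = W.toBlock p q * U.toBlock q q := by
    rw [Matrix.toBlock_mul_eq_add p q q W U]
    have hz : U.toBlock (fun k => ¬ q k) q = 0 := by
      ext a b
      exact hUt ↑a ↑b (Fin.lt_def.mpr (lt_of_lt_of_le b.2 (not_lt.mp a.2)))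
    rw [hz, Matrix.mul_zero, add_zero]
  rw [Matrix.mul_assoc, e1, e2, Matrix.rank_mul_eq_right_of_isUnit_det _ _ hLdet,
    Matrix.rank_mul_eq_left_of_isUnit_det _ _ hUdet]

lemma cnt_succ (w : Equiv.Perm (Fin n)) (a : ℕ) (ha : a < n) (j : ℕ) :
    cnt w (a + 1) j = cnt w a j
      + (if ((w ⟨a, ha⟩ : Fin n) : ℕ) < j then 1 else 0) := by
  classical
  unfold cnt
  have hsplit : ((univ : Finset (Fin n)).filter
        fun x : Fin n => (x : ℕ) < a + 1 ∧ ((w x : Fin n) : ℕ) < j)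
      = ((univ : Finset (Fin n)).filter fun x : Fin n => (x : ℕ) < a ∧ ((w x : Fin n) : ℕ) < j)
        ∪ ((univ : Finset (Fin n)).filter
            fun x : Fin n => x = ⟨a, ha⟩ ∧ ((w x : Fin n) : ℕ) < j) := by
    ext x
    simp only [Finset.mem_union, Finset.mem_filter, Finset.mem_univ, true_and,
      Nat.lt_succ_iff_lt_or_eq, Fin.ext_iff, or_and_right]
  rw [hsplit, Finset.card_union_of_disjoint]
  · congr 1
    by_cases h : ((w ⟨a, ha⟩ : Fin n) : ℕ) < j
    · rw [if_pos h]
      have he : ((univ : Finset (Fin n)).filter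
          fun x : Fin n => x = ⟨a, ha⟩ ∧ ((w x : Fin n) : ℕ) < j) = {⟨a, ha⟩} := by
        ext x
        simp only [Finset.mem_filter, Finset.mem_univ, true_and, Finset.mem_singleton]
        exact ⟨fun hx => hx.1, fun hx => ⟨hx, by rw [hx]; exact h⟩⟩
      rw [he, Finset.card_singleton]
    · rw [if_neg h]
      have he : ((univ : Finset (Fin n)).filter
          fun x : Fin n => x = ⟨a, ha⟩ ∧ ((w x : Fin n) : ℕ) < j) = ∅ := by
        ext x
        simp only [Finset.mem_filter, Finset.mem_univ, true_and, Finset.notMem_empty,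
          iff_false, not_and]
        rintro rfl
        exact h
      rw [he, Finset.card_empty]
  · rw [Finset.disjoint_left]
    intro x hx1 hx2
    rcases (Finset.mem_filter.mp hx1) with ⟨-, hx1, -⟩
    rcases (Finset.mem_filter.mp hx2) with ⟨-, rfl, -⟩
    exact absurd hx1 (lt_irrefl _)

lemma perm_eq (w w' : Equiv.Perm (Fin n)) (h : ∀ i j : ℕ, cnt w i j = cnt w' i j) :
    w = w' := by
  have key : ∀ (a : Fin n) (j : ℕ), (((w a : Fin n) : ℕ) < j ↔ ((w' a : Fin n) : ℕ) < j) := by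
    intro a j
    have h1 := cnt_succ w ↑a a.2 j
    have h2 := cnt_succ w' ↑a a.2 j
    rw [Fin.eta] at h1 h2
    have h3 := h (↑a + 1) j
    rw [h1, h2, h ↑a j] at h3
    have h4 := Nat.add_left_cancel h3
    by_cases hh : ((w a : Fin n) : ℕ) < j <;> by_cases hh' : ((w' a : Fin n) : ℕ) < j <;>
      simp [hh, hh'] at h4 ⊢
  refine Equiv.ext fun a => Fin.ext (Nat.le_antisymm ?_ ?_)
  · exact Nat.lt_succ_iff.mp ((key a (↑(w' a) + 1)).mpr (Nat.lt_succ_self _))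
  · exact Nat.lt_succ_iff.mp ((key a (↑(w a) + 1)).mp (Nat.lt_succ_self _))

end Uniqueness

end BruhatAux

/-- Bruhat decomposition: any invertible matrix `M` over a field can be written as
`M = L · W · U` with `L` lower triangular invertible, `U` upper triangular
invertible and `W` a permutation matrix, and the permutation `w` is unique. -/
theorem bruhat_decomposition {K : Type*} [Field K] {n : ℕ}
    (M : Matrix (Fin n) (Fin n) K) (hM : IsUnit M.det) :
    ∃! w : Equiv.Perm (Fin n), ∃ L U : Matrix (Fin n) (Fin n) K,
      IsUnit L.det ∧ (∀ i j : Fin n, i < j → L i j = 0) ∧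
      IsUnit U.det ∧ (∀ i j : Fin n, j < i → U i j = 0) ∧
      M = L * (w.permMatrix K) * U := by
  classical
  obtain ⟨w, L, U, hL, hLt, hU, hUt, hMeq⟩ := BruhatAux.exists_decomp n M hM
  refine ⟨w, ⟨L, U, hL, hLt, hU, hUt, hMeq⟩, ?_⟩
  rintro w' ⟨L', U', hL', hLt', hU', hUt', hMeq'⟩
  apply BruhatAux.perm_eq
  intro i j
  have e1 := BruhatAux.rank_block_decomp L' (w'.permMatrix K) U' hL' hLt' hU' hUt' i j
  have e2 := BruhatAux.rank_block_decomp L (w.permMatrix K) U hL hLt hU hUt i j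
  rw [← hMeq'] at e1
  rw [← hMeq] at e2
  rw [← BruhatAux.rank_perm_block (K := K) w' i j, ← BruhatAux.rank_perm_block (K := K) w i j,
    ← e1, ← e2]
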